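/- Let f : ℝ → ℝ be strictly decreasing, strictly convex, and C², with a (necessarily unique) root d. Then for every initial point x ∈ ℝ, the Newton iterates N_f^n(x) converge to d. -/

import Mathlib

/-- For strictly decreasing strictly convex `C²` functions Newton's method
converges globally to the unique root. -/
theorem newton_global_convergence
    (f : ℝ → ℝ) (hf : ContDiff ℝ 2 f)
    (hanti : StrictAnti f) (hconv : StrictConvexOn ℝ Set.univ f)
    (d : ℝ) (hd : f d = 0) :
    ∀ x : ℝ, Filter.Tendsto (fun n => (fun t => t - f t / deriv f t)^[n] x)
      Filter.atTop (nhds d) := by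
  intro x
  set N : ℝ → ℝ := fun t => t - f t / deriv f t with hN
  have hdiff : Differentiable ℝ f := hf.differentiable two_ne_zero
  have hderiv_cont : Continuous (deriv f) := by
    have : ContDiff ℝ 1 (deriv f) := by
      have h2 : ContDiff ℝ ((1 : WithTop ℕ∞) + 1) f := by
        rw [show ((1 : WithTop ℕ∞) + 1) = 2 by norm_num]; exact hf
      exact ((contDiff_succ_iff_deriv).mp h2).2.2
    exact this.continuous
  -- derivative is negative everywhere
  have hd' : ∀ t : ℝ, deriv f t < 0 := by
    intro t
    have h1 : deriv f t < slope f t (t + 1) :=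
      hconv.deriv_lt_slope (Set.mem_univ _) (Set.mem_univ _) (by linarith)
        (hdiff t)
    have h2 : slope f t (t + 1) < 0 := by
      rw [slope_def_field]
      have : f (t + 1) < f t := hanti (by linarith)
      have h3 : (t + 1) - t = 1 := by ring
      rw [h3]
      simpa using this
    linarith
  -- tangent line inequality (strict)
  have tangent : ∀ t y : ℝ, t ≠ y → f t + deriv f t * (y - t) < f y := by
    intro t y hty
    rcases lt_or_gt_of_ne hty with h | h
    · have := hconv.deriv_lt_slope (Set.mem_univ t) (Set.mem_univ y) h (hdiff t)
      rw [slope_def_field] at this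
      have hyt : 0 < y - t := by linarith
      have := (mul_lt_mul_iff_of_pos_right hyt).mpr this
      rw [div_mul_cancel₀ _ (ne_of_gt hyt)] at this
      linarith
    · have := hconv.slope_lt_deriv (Set.mem_univ y) (Set.mem_univ t) h (hdiff t)
      rw [slope_def_field] at this
      have hyt : 0 < t - y := by linarith
      have := (mul_lt_mul_iff_of_pos_right hyt).mpr this
      rw [div_mul_cancel₀ _ (ne_of_gt hyt)] at this
      nlinarith
  -- one Newton step always lands at or below d
  have hNle : ∀ t : ℝ, N t ≤ d := by
    intro t
    by_cases ht : N t = t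
    · have hft : f t = 0 := by
        have : f t / deriv f t = 0 := by
          have := sub_eq_self.mp ht
          linarith [this]
        exact (div_eq_zero_iff.mp this).resolve_right (ne_of_lt (hd' t))
      have : t = d := hanti.injective (by rw [hft, hd])
      subst this
      exact le_of_eq ht
    · have h := tangent t (N t) (fun h => ht h.symm)
      have : f t + deriv f t * (N t - t) = 0 := by
        have h0 : deriv f t ≠ 0 := ne_of_lt (hd' t)
        simp only [hN]
        field_simp
        ring
      rw [this] at h
      have : f (N t) > f d := by rw [hd]; exact h
      by_contra hc
      push_neg at hc
      exact absurd (hanti hc) (by linarith)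
  -- Newton step moves right when left of the root
  have hmono : ∀ t : ℝ, t ≤ d → t ≤ N t := by
    intro t ht
    have hft : 0 ≤ f t := by
      rcases eq_or_lt_of_le ht with rfl | h
      · simp [hd]
      · have := hanti h; rw [hd] at this; linarith
    have : f t / deriv f t ≤ 0 := div_nonpos_of_nonneg_of_nonpos hft (le_of_lt (hd' t))
    simp [hN]; linarith
  set a : ℕ → ℝ := fun n => N^[n] x with ha
  set b : ℕ → ℝ := fun n => a (n + 1) with hb
  have hab : ∀ n, b n = N (a n) := by
    intro n; simp [hb, ha, Function.iterate_succ_apply']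
  have hble : ∀ n, b n ≤ d := fun n => by rw [hab]; exact hNle _
  have hbsucc : ∀ n, b (n + 1) = N (b n) := fun n => by
    simp [hb, ha, Function.iterate_succ_apply']
  have hbmono : Monotone b := by
    apply monotone_nat_of_le_succ
    intro n
    rw [hbsucc]
    exact hmono _ (hble n)
  have hbdd : BddAbove (Set.range b) := ⟨d, by rintro _ ⟨n, rfl⟩; exact hble n⟩
  have htend : Filter.Tendsto b Filter.atTop (nhds (⨆ n, b n)) :=
    tendsto_atTop_ciSup hbmono hbdd
  set L := ⨆ n, b n with hL
  -- the limit is a fixed point of N, hence the root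
  have hNcont : ContinuousAt N L := by
    apply ContinuousAt.sub continuousAt_id
    exact (hdiff.continuous.continuousAt).div hderiv_cont.continuousAt (ne_of_lt (hd' L))
  have htend2 : Filter.Tendsto (fun n => N (b n)) Filter.atTop (nhds (N L)) :=
    hNcont.tendsto.comp htend
  have htend3 : Filter.Tendsto (fun n => b (n + 1)) Filter.atTop (nhds L) :=
    (Filter.tendsto_add_atTop_iff_nat 1).mpr htend
  have hNL : N L = L := by
    have : Filter.Tendsto (fun n => b (n + 1)) Filter.atTop (nhds (N L)) := by
      simpa [hbsucc] using htend2
    exact tendsto_nhds_unique this htend3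
  have hfL : f L = 0 := by
    have h0 : f L / deriv f L = 0 := by
      have := sub_eq_self.mp hNL
      linarith
    exact (div_eq_zero_iff.mp h0).resolve_right (ne_of_lt (hd' L))
  have hLd : L = d := hanti.injective (by rw [hfL, hd])
  rw [hLd] at htend
  exact (Filter.tendsto_add_atTop_iff_nat 1).mp htend
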